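/- Orthonormal basis from a compact open subgroup: Let G₀ be a second-countable metrizable LCA group containing a compact open subgroup K, with Haar measure normalized so that K has measure 1. Let D₁ be a complete set of coset representatives of G₀/K in G₀ and D₂ a complete set of coset representatives of Ĝ₀/K⊥ in Ĝ₀, where K⊥ = {ξ ∈ Ĝ₀ : ⟨ξ,k⟩ = 1 for all k ∈ K}. Then the Gabor system {M_δ T_d χ_K : d ∈ D₁, δ ∈ D₂} is an orthonormal basis of L²(G₀). -/

import Mathlib

/- Common definitions: time-frequency analysis on locally compact abelian groups,
   following Gröchenig–Strohmer, "Pseudodifferential operators on locally compact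
   abelian groups and Sjöstrand's symbol class". -/

noncomputable section

open MeasureTheory Complex Filter Topology ENNReal ComplexConjugate

namespace GSjo

/-- `p : H → G → ℂ` is a perfect duality pairing identifying the LCA group `H`
with the Pontryagin dual of the LCA group `G`. -/
structure IsDualPairing {G H : Type*} [AddCommGroup G] [TopologicalSpace G]
    [AddCommGroup H] [TopologicalSpace H] (p : H → G → ℂ) : Prop where
  continuous : Continuous fun q : H × G => p q.1 q.2
  norm_one : ∀ ξ x, ‖p ξ x‖ = 1
  add_left : ∀ ξ η x, p (ξ + η) x = p ξ x * p η x
  add_right : ∀ ξ x y, p ξ (x + y) = p ξ x * p ξ y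
  sep_left : ∀ ξ : H, ξ ≠ 0 → ∃ x, p ξ x ≠ 1
  sep_right : ∀ x : G, x ≠ 0 → ∃ ξ, p ξ x ≠ 1
  full : ∀ χ : G → ℂ, Continuous χ → (∀ x, ‖χ x‖ = 1) →
    (∀ x y, χ (x + y) = χ x * χ y) → ∃ ξ, ∀ x, χ x = p ξ x

variable {G H : Type*}

/-- The Fourier transform on `G` with respect to the Haar measure `μ` and the pairing `p`. -/
def ft [MeasurableSpace G] (μ : Measure G) (p : H → G → ℂ) (f : G → ℂ) (ξ : H) : ℂ :=
  ∫ x, f x * conj (p ξ x) ∂μ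

/-- `ν` is the dual Haar measure: Fourier inversion holds. -/
def FourierInversion [MeasurableSpace G] [MeasurableSpace H]
    (μ : Measure G) (ν : Measure H) (p : H → G → ℂ) : Prop :=
  ∀ f : G → ℂ, Integrable f μ → Integrable (ft μ p f) ν →
    ∀ᵐ x ∂μ, f x = ∫ ξ, ft μ p f ξ * p ξ x ∂ν

/-- The time-frequency shift `π(z) g = M_{z.2} T_{z.1} g`. -/
def tfshift [AddGroup G] (p : H → G → ℂ) (z : G × H) (g : G → ℂ) : G → ℂ :=
  fun t => p z.2 t * g (t - z.1)

/-- The short-time Fourier transform `V_φ f (z) = ⟨f, π(z) φ⟩`. -/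
def stft [AddGroup G] [MeasurableSpace G] (μ : Measure G) (p : H → G → ℂ)
    (φ : G → ℂ) (f : G → ℂ) (z : G × H) : ℂ :=
  ∫ t, f t * conj (tfshift p z φ t) ∂μ

/-- The Kohn–Nirenberg pseudodifferential operator `K_σ`. -/
def knOp [MeasurableSpace G] [MeasurableSpace H] (μ : Measure G) (ν : Measure H)
    (p : H → G → ℂ) (σ : G × H → ℂ) (f : G → ℂ) (x : G) : ℂ :=
  ∫ ξ, σ (x, ξ) * ft μ p f ξ * p ξ x ∂ν

/-- The Kohn–Nirenberg operator applied to a function with prescribed Fourier transform `fh`. -/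
def knOpF [MeasurableSpace H] (ν : Measure H) (p : H → G → ℂ)
    (σ : G × H → ℂ) (fh : H → ℂ) (x : G) : ℂ :=
  ∫ ξ, σ (x, ξ) * fh ξ * p ξ x ∂ν

/-- The pairing between the phase space `G×Ĝ` and its dual group `Ĝ×G`. -/
def phasePair (p : H → G → ℂ) : H × G → G × H → ℂ :=
  fun ω z => p ω.1 z.1 * p z.2 ω.2

/-- The operator with spreading function `F`:  `∫ F(ω,u) M_ω T_{-u} f dω du`. -/
def spreadOp [AddGroup G] [MeasurableSpace G] [MeasurableSpace H]
    (μ : Measure G) (ν : Measure H) (p : H → G → ℂ)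
    (F : H × G → ℂ) (f : G → ℂ) (x : G) : ℂ :=
  ∫ w : H × G, F w * p w.1 x * f (x + w.2) ∂(ν.prod μ)

/-- The symbol whose spreading function is `F`. -/
def symbolOfSpread [MeasurableSpace G] [MeasurableSpace H]
    (μ : Measure G) (ν : Measure H) (p : H → G → ℂ)
    (F : H × G → ℂ) : G × H → ℂ :=
  fun z => ∫ w : H × G, F w * p w.1 z.1 * p z.2 w.2 ∂(ν.prod μ)

/-- The twisted convolution of two spreading functions on `Ĝ×G`. -/
def twistedConv [AddGroup G] [AddGroup H] [MeasurableSpace G] [MeasurableSpace H]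
    (μ : Measure G) (ν : Measure H) (p : H → G → ℂ)
    (F F' : H × G → ℂ) : H × G → ℂ :=
  fun w => ∫ w' : H × G, F w' * F' (w.1 - w'.1, w.2 - w'.2) * p (w.1 - w'.1) w'.2 ∂(ν.prod μ)

/-- The (cross) Rihaczek distribution `R(f,g)(x,ξ) = f(x) conj(ĝ(ξ)) conj⟨ξ,x⟩`,
with the Fourier transform `ĝ` passed explicitly as `gh`. -/
def rihaczek (p : H → G → ℂ) (f : G → ℂ) (gh : H → ℂ) : G × H → ℂ :=
  fun z => f z.1 * conj (gh z.2) * conj (p z.2 z.1)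

/-- `fh` is the Fourier–Plancherel transform of `f ∈ L²(G)`. -/
def IsPlancherelFT [MeasurableSpace G] [MeasurableSpace H]
    (μ : Measure G) (ν : Measure H) (p : H → G → ℂ)
    (f : G → ℂ) (fh : H → ℂ) : Prop :=
  MemLp f 2 μ ∧ MemLp fh 2 ν ∧
    ∀ φ : G → ℂ, Integrable φ μ → MemLp φ 2 μ →
      ∫ x, f x * conj (φ x) ∂μ = ∫ ξ, fh ξ * conj (ft μ p φ ξ) ∂ν

/-- An admissible weight on a product group `A × B` (e.g. on the phase space `G×Ĝ`):
continuous, nonnegative, normalized, even in each coordinate, submultiplicative and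
satisfying the GRS condition. -/
structure AdmissibleWeight {A B : Type*} [AddCommGroup A] [AddCommGroup B]
    [TopologicalSpace A] [TopologicalSpace B] (v : A × B → ℝ) : Prop where
  nonneg : ∀ z, 0 ≤ v z
  continuous : Continuous v
  norm_zero : v 0 = 1
  even_left : ∀ x y, v (-x, y) = v (x, y)
  even_right : ∀ x y, v (x, -y) = v (x, y)
  submul : ∀ z w, v (z + w) ≤ v z * v w
  grs : ∀ z, Tendsto (fun n : ℕ => (v (n • z)) ^ ((1 : ℝ) / n)) atTop (nhds 1)

/-- An admissible weight on a discrete group `D`. -/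
structure AdmissibleWeightD {D : Type*} [AddCommGroup D] (v : D → ℝ) : Prop where
  nonneg : ∀ x, 0 ≤ v x
  norm_zero : v 0 = 1
  even : ∀ x, v (-x) = v x
  submul : ∀ x y, v (x + y) ≤ v x * v y
  grs : ∀ x, Tendsto (fun n : ℕ => (v (n • x)) ^ ((1 : ℝ) / n)) atTop (nhds 1)

/-- `m` is a `v`-moderate weight. -/
def Moderate {P : Type*} [AddCommGroup P] (v m : P → ℝ) : Prop :=
  (∀ z, 0 ≤ m z) ∧ ∃ C > 0, ∀ z w, m (z + w) ≤ C * v w * m z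

/-- Bounded measurable function (enough to define all the STFT integrals below). -/
def BddM {X : Type*} [MeasurableSpace X] (σ : X → ℂ) : Prop :=
  Measurable σ ∧ ∃ C, ∀ z, ‖σ z‖ ≤ C

/-- The norm of the generalized Sjöstrand class `M^{∞,1}_{v∘J⁻¹}(G×Ĝ)` with window `Φ`:
`∫_{Ĝ×G} sup_z |V_Φ σ(z,ω)| v(J⁻¹ ω) dω`, where `J⁻¹(ω₁,u) = (u,-ω₁)`. -/
def sjoNorm [AddCommGroup G] [AddCommGroup H] [MeasurableSpace G] [MeasurableSpace H]
    (μ : Measure G) (ν : Measure H) (p : H → G → ℂ) (Φ : G × H → ℂ)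
    (v : G × H → ℝ) (σ : G × H → ℂ) : ℝ≥0∞ :=
  ∫⁻ ω : H × G, (⨆ z : G × H, (‖stft (μ.prod ν) (phasePair p) Φ σ (z, ω)‖₊ : ℝ≥0∞)) *
    ENNReal.ofReal (v (ω.2, -ω.1)) ∂(ν.prod μ)

/-- The norm of the modulation space `M¹_v(G)` with window `φ`. -/
def m1Norm [AddCommGroup G] [MeasurableSpace G] [MeasurableSpace H]
    (μ : Measure G) (ν : Measure H) (p : H → G → ℂ) (φ : G → ℂ)
    (v : G × H → ℝ) (g : G → ℂ) : ℝ≥0∞ :=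
  ∫⁻ z : G × H, (‖stft μ p φ g z‖₊ : ℝ≥0∞) * ENNReal.ofReal (v z) ∂(μ.prod ν)

/-- `L^p`-norm (`p ∈ [1,∞]`) of an `ℝ≥0∞`-valued function. -/
def lpNormE {X : Type*} [MeasurableSpace X] (μ : Measure X) (p : ℝ≥0∞)
    (f : X → ℝ≥0∞) : ℝ≥0∞ :=
  if p = ∞ then essSup f μ else (∫⁻ x, f x ^ p.toReal ∂μ) ^ ((1 : ℝ) / p.toReal)

/-- Mixed `L^{p,q}`-norm on a product measure space. -/
def mixedNorm {X Y : Type*} [MeasurableSpace X] [MeasurableSpace Y]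
    (μ : Measure X) (ν : Measure Y) (p q : ℝ≥0∞) (F : X × Y → ℝ≥0∞) : ℝ≥0∞ :=
  lpNormE ν q (fun y => lpNormE μ p (fun x => F (x, y)))

/-- The norm of the modulation space `M^{p,q}_m(G)` with window `φ`. -/
def modNorm [AddCommGroup G] [MeasurableSpace G] [MeasurableSpace H]
    (μ : Measure G) (ν : Measure H) (p : H → G → ℂ) (φ : G → ℂ)
    (pp qq : ℝ≥0∞) (m : G × H → ℝ) (f : G → ℂ) : ℝ≥0∞ :=
  mixedNorm μ ν pp qq (fun z => (‖stft μ p φ f z‖₊ : ℝ≥0∞) * ENNReal.ofReal (m z))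

/-- `T` is the bounded operator on `L²(G)` represented by the Kohn–Nirenberg
operator with symbol `σ`. -/
def RepresentsL2 [AddCommGroup G] [TopologicalSpace G] [MeasurableSpace G] [MeasurableSpace H]
    (μ : Measure G) (ν : Measure H) (p : H → G → ℂ) (σ : G × H → ℂ)
    (T : Lp ℂ 2 μ →L[ℂ] Lp ℂ 2 μ) : Prop :=
  ∀ f : G → ℂ, Integrable f μ → ∀ hf : MemLp f 2 μ, Integrable (ft μ p f) ν →
    (T (hf.toLp f) : G → ℂ) =ᵐ[μ] knOp μ ν p σ f

/-- The weak matrix coefficient `⟨K_σ π(z)g, π(y)g⟩` of a pseudodifferential operator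
with respect to the Gabor system generated by `g`. -/
def gaborEntry [AddGroup G] [MeasurableSpace G] [MeasurableSpace H]
    (μ : Measure G) (ν : Measure H) (p : H → G → ℂ)
    (σ : G × H → ℂ) (g : G → ℂ) (z y : G × H) : ℂ :=
  ∫ w : G × H, σ w * ft μ p (tfshift p z g) w.2 * p w.2 w.1 *
    conj (tfshift p y g w.1) ∂(μ.prod ν)

/-- The norm of the (weighted) nonstationary Wiener algebra `C_v(D)` of matrices. -/
def cvNorm {D : Type*} [AddCommGroup D] (v : D → ℝ) (A : D → D → ℂ) : ℝ≥0∞ :=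
  ∑' j : D, (⨆ i : D, (‖A i (i - j)‖₊ : ℝ≥0∞)) * ENNReal.ofReal (v j)

/-- `T` is the bounded operator on `ℓ²(D)` with matrix `A`. -/
def MatRepr {D : Type*} [AddCommGroup D] (A : D → D → ℂ)
    (T : lp (fun _ : D => ℂ) 2 →L[ℂ] lp (fun _ : D => ℂ) 2) : Prop :=
  ∀ c : lp (fun _ : D => ℂ) 2, ∀ i : D, T c i = ∑' j : D, A i j * c j

/- ### The concrete structure-theorem setting `G ≅ ℝ^d × G₀` -/

/-- The Gaussian window on `ℝ^d`. -/
def gaussW (d : ℕ) (x : Fin d → ℝ) : ℂ := Complex.exp (-(Real.pi : ℂ) * ∑ i, (x i : ℂ) ^ 2)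

/-- The annihilator `K⊥` of the compact open subgroup `K`. -/
def Kperp {G₀ H₀ : Type*} (p₀ : H₀ → G₀ → ℂ) (K : Set G₀) : Set H₀ :=
  {ξ | ∀ k ∈ K, p₀ ξ k = 1}

/-- The test window `φ = (Gaussian) ⊗ χ_K` on `G = ℝ^d × G₀`. -/
def winG {G₀ : Type*} (d : ℕ) (K : Set G₀) : (Fin d → ℝ) × G₀ → ℂ :=
  fun x => gaussW d x.1 * Set.indicator K (fun _ => (1 : ℂ)) x.2

/-- The test window `Φ = (Gaussian) ⊗ χ_{K×K⊥}` on the phase space `G×Ĝ`. -/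
def winP {G₀ H₀ : Type*} (d : ℕ) (p₀ : H₀ → G₀ → ℂ) (K : Set G₀) :
    ((Fin d → ℝ) × G₀) × ((Fin d → ℝ) × H₀) → ℂ :=
  fun z => gaussW d z.1.1 * gaussW d z.2.1 *
    Set.indicator K (fun _ => (1 : ℂ)) z.1.2 *
    Set.indicator (Kperp p₀ K) (fun _ => (1 : ℂ)) z.2.2

/-- The standard character pairing on `ℝ^d`. -/
def eRd (d : ℕ) (ξ x : Fin d → ℝ) : ℂ :=
  Complex.exp (2 * (Real.pi : ℂ) * Complex.I * (∑ i, (ξ i : ℂ) * (x i : ℂ)))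

/-- The duality pairing of `Ĝ = ℝ^d × Ĝ₀` with `G = ℝ^d × G₀`. -/
def pairG {G₀ H₀ : Type*} (d : ℕ) (p₀ : H₀ → G₀ → ℂ) :
    (Fin d → ℝ) × H₀ → (Fin d → ℝ) × G₀ → ℂ :=
  fun ξ x => eRd d ξ.1 x.1 * p₀ ξ.2 x.2


section ONBAux
set_option linter.unusedSectionVars false

open Set MeasureTheory

variable {G₀ : Type*} [AddCommGroup G₀] [TopologicalSpace G₀] [IsTopologicalAddGroup G₀]
    [MeasurableSpace G₀] [BorelSpace G₀]
    {H₀ : Type*} [AddCommGroup H₀] [TopologicalSpace H₀]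
    {p₀ : H₀ → G₀ → ℂ}

theorem onb_pne (hp : IsDualPairing p₀) (ξ : H₀) (x : G₀) : p₀ ξ x ≠ 0 := by
  intro h
  have h1 := hp.norm_one ξ x
  rw [h, norm_zero] at h1
  exact zero_ne_one h1

theorem onb_pzero (hp : IsDualPairing p₀) (x : G₀) : p₀ 0 x = 1 := by
  have h := hp.add_left 0 0 x
  rw [zero_add] at h
  exact (mul_left_cancel₀ (onb_pne hp 0 x) (by rw [mul_one]; exact h)).symm

theorem onb_pconj (hp : IsDualPairing p₀) (ξ : H₀) (x : G₀) :
    conj (p₀ ξ x) = p₀ (-ξ) x := by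
  have h1 : p₀ ξ x * p₀ (-ξ) x = 1 := by
    rw [← hp.add_left, add_neg_cancel, onb_pzero hp]
  have h2 : conj (p₀ ξ x) * p₀ ξ x = 1 := by
    rw [mul_comm, Complex.mul_conj, Complex.normSq_eq_norm_sq,
      hp.norm_one, one_pow, Complex.ofReal_one]
  calc conj (p₀ ξ x) = conj (p₀ ξ x) * (p₀ ξ x * p₀ (-ξ) x) := by rw [h1, mul_one]
  _ = conj (p₀ ξ x) * p₀ ξ x * p₀ (-ξ) x := by ring
  _ = p₀ (-ξ) x := by rw [h2, one_mul]

theorem onb_pcont (hp : IsDualPairing p₀) (ξ : H₀) : Continuous (p₀ ξ) :=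
  hp.continuous.comp (Continuous.prodMk_right ξ)

theorem onb_zero_mem_Kperp (hp : IsDualPairing p₀) (K : Set G₀) :
    (0 : H₀) ∈ Kperp p₀ K := fun k _ => onb_pzero hp k

theorem onb_D2_eq (hp : IsDualPairing p₀) {K : Set G₀} {D₂ : Set H₀}
    (hD₂ : ∀ ξ : H₀, ∃! δ, δ ∈ D₂ ∧ ξ - δ ∈ Kperp p₀ K)
    {δ δ' : H₀} (hδ : δ ∈ D₂) (hδ' : δ' ∈ D₂) (h : δ - δ' ∈ Kperp p₀ K) : δ = δ' := by
  obtain ⟨δ'', -, huniq⟩ := hD₂ δ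
  have h1 := huniq δ ⟨hδ, by rw [sub_self]; exact onb_zero_mem_Kperp hp K⟩
  have h2 := huniq δ' ⟨hδ', h⟩
  exact h1.trans h2.symm

theorem onb_D1_eq {K : AddSubgroup G₀} {D₁ : Set G₀}
    (hD₁ : ∀ x : G₀, ∃! d, d ∈ D₁ ∧ x - d ∈ K)
    {d d' : G₀} (hd : d ∈ D₁) (hd' : d' ∈ D₁) {x : G₀}
    (h : x - d ∈ (K : Set G₀)) (h' : x - d' ∈ (K : Set G₀)) : d = d' := by
  obtain ⟨e, -, huniq⟩ := hD₁ x
  exact (huniq d ⟨hd, h⟩).trans (huniq d' ⟨hd', h'⟩).symm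

/-- The coset `d + K` as a subset of `G₀`. -/
def onbCoset (K : AddSubgroup G₀) (d : G₀) : Set G₀ := (fun x => x - d) ⁻¹' (K : Set G₀)

theorem onb_mem_coset {K : AddSubgroup G₀} {d x : G₀} :
    x ∈ onbCoset K d ↔ x - d ∈ (K : Set G₀) := Iff.rfl

theorem onbCoset_isOpen {K : AddSubgroup G₀} (hKo : IsOpen (K : Set G₀)) (d : G₀) :
    IsOpen (onbCoset K d) := hKo.preimage (continuous_sub_right d)

theorem onbCoset_isCompact {K : AddSubgroup G₀} (hKc : IsCompact (K : Set G₀)) (d : G₀) :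
    IsCompact (onbCoset K d) := by
  have h : onbCoset K d = (fun y => d + y) '' (K : Set G₀) := by
    ext x
    constructor
    · intro hx
      exact ⟨x - d, hx, add_sub_cancel d x⟩
    · rintro ⟨y, hy, rfl⟩
      simpa [onb_mem_coset] using hy
  rw [h]
  exact hKc.image (continuous_add_left d)

theorem onbCoset_measure (μ₀ : Measure G₀) [μ₀.IsAddHaarMeasure] (K : AddSubgroup G₀)
    (d : G₀) : μ₀ (onbCoset K d) = μ₀ (K : Set G₀) := by
  have h : onbCoset K d = (fun x => x + (-d)) ⁻¹' (K : Set G₀) := by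
    ext x; simp [onb_mem_coset, sub_eq_add_neg]
  rw [h, measure_preimage_add_right]

/-- The bi-invariance trick: integral of a nontrivial character over `K` vanishes. -/
theorem onb_integral_char_not_mem (μ₀ : Measure G₀) [μ₀.IsAddHaarMeasure]
    (hp : IsDualPairing p₀) (K : AddSubgroup G₀) {η : H₀}
    (hη : η ∉ Kperp p₀ (K : Set G₀)) :
    ∫ x, Set.indicator (K : Set G₀) (fun _ => (1 : ℂ)) x * p₀ η x ∂μ₀ = 0 := by
  obtain ⟨k₀, hk₀K, hk₀⟩ : ∃ k ∈ (K : Set G₀), p₀ η k ≠ 1 := by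
    by_contra h
    push_neg at h
    exact hη h
  have hk₀K' : k₀ ∈ K := hk₀K
  set J := ∫ x, Set.indicator (K : Set G₀) (fun _ => (1 : ℂ)) x * p₀ η x ∂μ₀ with hJ
  have hKiff : ∀ x : G₀, x - k₀ ∈ (K : Set G₀) ↔ x ∈ (K : Set G₀) := by
    intro x
    constructor
    · intro h
      have := K.add_mem h hk₀K'
      simpa using this
    · intro h
      exact K.sub_mem h hk₀K'
  have key : p₀ η k₀ * J = J := by
    calc p₀ η k₀ * J
        = ∫ x, Set.indicator (K : Set G₀) (fun _ => (1 : ℂ)) x * p₀ η (k₀ + x) ∂μ₀ := by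
          rw [hJ, ← integral_const_mul]
          refine integral_congr_ae (Filter.Eventually.of_forall fun x => ?_)
          simp only [hp.add_right]
          ring
      _ = ∫ x, Set.indicator (K : Set G₀) (fun _ => (1 : ℂ)) (x - k₀) * p₀ η x ∂μ₀ := by
          have h := integral_add_left_eq_self (μ := μ₀)
            (fun x => Set.indicator (K : Set G₀) (fun _ => (1 : ℂ)) (x - k₀) * p₀ η x) k₀
          simp only [add_sub_cancel_left] at h
          exact h
      _ = J := by
          rw [hJ]
          refine integral_congr_ae (Filter.Eventually.of_forall fun x => ?_)
          beta_reduce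
          congr 1
          by_cases hx : x ∈ (K : Set G₀)
          · rw [Set.indicator_of_mem hx, Set.indicator_of_mem ((hKiff x).mpr hx)]
          · rw [Set.indicator_of_notMem hx,
              Set.indicator_of_notMem (fun h => hx ((hKiff x).mp h))]
  have h0 : (p₀ η k₀ - 1) * J = 0 := by rw [sub_mul, one_mul, key, sub_self]
  rcases mul_eq_zero.mp h0 with h | h
  · exact absurd (sub_eq_zero.mp h) hk₀
  · exact h

theorem onb_integral_char_mem (μ₀ : Measure G₀) (K : AddSubgroup G₀)
    (hKo : IsOpen (K : Set G₀)) (hμK : μ₀ (K : Set G₀) = 1) {η : H₀}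
    (hη : η ∈ Kperp p₀ (K : Set G₀)) :
    ∫ x, Set.indicator (K : Set G₀) (fun _ => (1 : ℂ)) x * p₀ η x ∂μ₀ = 1 := by
  have h : ∀ x, Set.indicator (K : Set G₀) (fun _ => (1 : ℂ)) x * p₀ η x
      = Set.indicator (K : Set G₀) (fun _ => (1 : ℂ)) x := by
    intro x
    by_cases hx : x ∈ (K : Set G₀)
    · rw [Set.indicator_of_mem hx, one_mul, hη x hx]
    · rw [Set.indicator_of_notMem hx, zero_mul]
  rw [integral_congr_ae (Filter.Eventually.of_forall h),
    integral_indicator_const (1 : ℂ) hKo.measurableSet, measureReal_def, hμK]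
  simp

theorem onb_integral_coset_char (μ₀ : Measure G₀) [μ₀.IsAddHaarMeasure]
    (hp : IsDualPairing p₀) (K : AddSubgroup G₀) (d : G₀) (η : H₀) :
    ∫ x, Set.indicator (K : Set G₀) (fun _ => (1 : ℂ)) (x - d) * p₀ η x ∂μ₀
      = p₀ η d * ∫ x, Set.indicator (K : Set G₀) (fun _ => (1 : ℂ)) x * p₀ η x ∂μ₀ := by
  have h := integral_add_left_eq_self (μ := μ₀)
    (fun x => Set.indicator (K : Set G₀) (fun _ => (1 : ℂ)) (x - d) * p₀ η x) d
  simp only [add_sub_cancel_left] at h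
  rw [← h, ← integral_const_mul]
  refine integral_congr_ae (Filter.Eventually.of_forall fun x => ?_)
  simp only [hp.add_right]
  ring

/-- The Gabor system member `M_δ T_d χ_K`. -/
def onbGb (p₀ : H₀ → G₀ → ℂ) (K : AddSubgroup G₀) (d : G₀) (δ : H₀) : G₀ → ℂ :=
  fun x => p₀ δ x * Set.indicator (K : Set G₀) (fun _ => (1 : ℂ)) (x - d)

theorem onbGb_eq_tfshift (K : AddSubgroup G₀) (d : G₀) (δ : H₀) :
    onbGb p₀ K d δ = tfshift p₀ (d, δ) (Set.indicator (K : Set G₀) (fun _ => (1 : ℂ))) := rfl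

theorem onbGb_eq_indicator (K : AddSubgroup G₀) (d : G₀) (δ : H₀) :
    onbGb p₀ K d δ = (onbCoset K d).indicator (p₀ δ) := by
  funext x
  by_cases hx : x - d ∈ (K : Set G₀)
  · rw [onbGb, Set.indicator_of_mem hx, mul_one, Set.indicator_of_mem (onb_mem_coset.mpr hx)]
  · rw [onbGb, Set.indicator_of_notMem hx, mul_zero,
      Set.indicator_of_notMem (fun h => hx (onb_mem_coset.mp h))]

theorem onbGb_memL2 (μ₀ : Measure G₀) [μ₀.IsAddHaarMeasure] (hp : IsDualPairing p₀)
    (K : AddSubgroup G₀) (hKc : IsCompact (K : Set G₀)) (hKo : IsOpen (K : Set G₀))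
    (d : G₀) (δ : H₀) : MemLp (onbGb p₀ K d δ) 2 μ₀ := by
  have hmeas : MeasurableSet (onbCoset K d) := (onbCoset_isOpen hKo d).measurableSet
  rw [onbGb_eq_indicator]
  have hconst : MemLp ((onbCoset K d).indicator (fun _ => (1 : ℝ))) 2 μ₀ :=
    memLp_indicator_const 2 hmeas 1
      (Or.inr (by rw [onbCoset_measure]; exact hKc.measure_lt_top.ne))
  refine MemLp.of_le hconst ((onb_pcont hp δ).aestronglyMeasurable.indicator hmeas) ?_
  refine Filter.Eventually.of_forall fun x => ?_
  by_cases hx : x ∈ onbCoset K d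
  · simp [Set.indicator_of_mem hx, hp.norm_one]
  · simp [Set.indicator_of_notMem hx]

open Classical in
theorem onbGb_integral (μ₀ : Measure G₀) [μ₀.IsAddHaarMeasure] (hp : IsDualPairing p₀)
    (K : AddSubgroup G₀) (hKo : IsOpen (K : Set G₀)) (hμK : μ₀ (K : Set G₀) = 1)
    {D₁ : Set G₀} (hD₁ : ∀ x : G₀, ∃! d, d ∈ D₁ ∧ x - d ∈ K)
    {D₂ : Set H₀} (hD₂ : ∀ ξ : H₀, ∃! δ, δ ∈ D₂ ∧ ξ - δ ∈ Kperp p₀ (K : Set G₀))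
    {d δ d' δ'} (hd : d ∈ D₁) (hδ : δ ∈ D₂) (hd' : d' ∈ D₁) (hδ' : δ' ∈ D₂) :
    ∫ x, onbGb p₀ K d δ x * conj (onbGb p₀ K d' δ' x) ∂μ₀
      = if d = d' ∧ δ = δ' then 1 else 0 := by
  classical
  by_cases hdd : d = d'
  · subst hdd
    have hpoint : ∀ x, onbGb p₀ K d δ x * conj (onbGb p₀ K d δ' x)
        = Set.indicator (K : Set G₀) (fun _ => (1 : ℂ)) (x - d) * p₀ (δ - δ') x := by
      intro x
      by_cases hx : x - d ∈ (K : Set G₀)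
      · simp only [onbGb, Set.indicator_of_mem hx, mul_one, onb_pconj hp, one_mul]
        rw [← hp.add_left, ← sub_eq_add_neg]
      · simp [onbGb, Set.indicator_of_notMem hx]
    rw [integral_congr_ae (Filter.Eventually.of_forall hpoint),
      onb_integral_coset_char μ₀ hp K d (δ - δ')]
    by_cases hδδ : δ = δ'
    · subst hδδ
      rw [sub_self, onb_integral_char_mem μ₀ K hKo hμK (onb_zero_mem_Kperp hp _),
        onb_pzero hp, one_mul]
      simp
    · have hsub : δ - δ' ∉ Kperp p₀ (K : Set G₀) := fun h => hδδ (onb_D2_eq hp hD₂ hδ hδ' h)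
      rw [onb_integral_char_not_mem μ₀ hp K hsub, mul_zero]
      simp [hδδ]
  · have hpoint : ∀ x, onbGb p₀ K d δ x * conj (onbGb p₀ K d' δ' x) = 0 := by
      intro x
      by_cases h1 : x - d ∈ (K : Set G₀)
      · by_cases h2 : x - d' ∈ (K : Set G₀)
        · exact absurd (onb_D1_eq hD₁ hd hd' h1 h2) hdd
        · simp [onbGb, Set.indicator_of_notMem h2]
      · simp [onbGb, Set.indicator_of_notMem h1]
    rw [integral_congr_ae (Filter.Eventually.of_forall hpoint), integral_zero]
    simp [hdd]

theorem onb_D1_countable [SecondCountableTopology G₀] {K : AddSubgroup G₀}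
    (hKo : IsOpen (K : Set G₀)) {D₁ : Set G₀}
    (hD₁ : ∀ x : G₀, ∃! d, d ∈ D₁ ∧ x - d ∈ K) : D₁.Countable := by
  have hdisj : D₁.PairwiseDisjoint (fun d => onbCoset K d) := by
    intro d hd d' hd' hne
    exact Set.disjoint_left.mpr fun x hx hx' => hne (onb_D1_eq hD₁ hd hd' hx hx')
  exact hdisj.countable_of_isOpen (fun d _ => onbCoset_isOpen hKo d)
    (fun d _ => ⟨d, onb_mem_coset.mpr (by simp [K.zero_mem])⟩)

/-- If `f ∈ L²` is orthogonal to all characters on the coset `d + K`, it vanishes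
a.e. on that coset.  Proved via Stone–Weierstrass and density of bounded continuous
functions in `L²`. -/
theorem onb_ae_zero_on_coset [LocallyCompactSpace G₀] [SecondCountableTopology G₀]
    [TopologicalSpace.MetrizableSpace G₀]
    (μ₀ : Measure G₀) [μ₀.IsAddHaarMeasure] (hp : IsDualPairing p₀)
    (K : AddSubgroup G₀) (hKc : IsCompact (K : Set G₀)) (hKo : IsOpen (K : Set G₀))
    {D₂ : Set H₀} (hD₂ : ∀ ξ : H₀, ∃! δ, δ ∈ D₂ ∧ ξ - δ ∈ Kperp p₀ (K : Set G₀))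
    (d : G₀) {f : G₀ → ℂ} (hf : MemLp f 2 μ₀)
    (h0 : ∀ δ ∈ D₂, ∫ x in onbCoset K d, conj (p₀ δ x) * f x ∂μ₀ = 0) :
    ∀ᵐ x ∂(μ₀.restrict (onbCoset K d)), f x = 0 := by
  set C := onbCoset K d with hC
  have hCmeas : MeasurableSet C := (onbCoset_isOpen hKo d).measurableSet
  have hCcomp : IsCompact C := onbCoset_isCompact hKc d
  haveI : IsFiniteMeasure (μ₀.restrict C) :=
    ⟨by rw [Measure.restrict_apply_univ]; exact hCcomp.measure_lt_top⟩
  have hfi : Integrable f (μ₀.restrict C) := (hf.restrict C).integrable one_le_two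
  -- Step A : orthogonality extends to all characters
  have hstepA : ∀ ξ : H₀, ∫ x in C, conj (p₀ ξ x) * f x ∂μ₀ = 0 := by
    intro ξ
    obtain ⟨δ, ⟨hδD, hδK⟩, -⟩ := hD₂ ξ
    have hcongr : Set.EqOn (fun x => conj (p₀ ξ x) * f x)
        (fun x => conj (p₀ (ξ - δ) d) * (conj (p₀ δ x) * f x)) C := by
      intro x hx
      have hxK : x - d ∈ (K : Set G₀) := hx
      have e2 : p₀ (ξ - δ) d * p₀ (ξ - δ) (x - d) = p₀ (ξ - δ) x := by
        rw [← hp.add_right, add_sub_cancel]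
      have h1 : p₀ ξ x = p₀ (ξ - δ) d * p₀ δ x := by
        have e1 : p₀ ξ x = p₀ (ξ - δ) x * p₀ δ x := by
          rw [← hp.add_left, sub_add_cancel]
        rw [e1, ← e2, hδK _ hxK, mul_one]
      simp only
      rw [h1, map_mul, mul_assoc]
    rw [setIntegral_congr_fun hCmeas hcongr, integral_const_mul, h0 δ hδD, mul_zero]
  -- Step B/C : orthogonality against every bounded continuous function
  have hstepC : ∀ g : BoundedContinuousFunction G₀ ℂ,
      ∫ x in C, conj (g x) * f x ∂μ₀ = 0 := by
    haveI : CompactSpace C := isCompact_iff_compactSpace.mp hCcomp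
    set ch : H₀ → C(C, ℂ) :=
      fun ξ => ⟨fun z => p₀ ξ z.1, (onb_pcont hp ξ).comp continuous_subtype_val⟩ with hch
    set R : Set C(C, ℂ) := Set.range ch with hR
    set M : Submodule ℂ C(C, ℂ) := Submodule.span ℂ R with hM
    have hmulR : ∀ a ∈ R, ∀ b ∈ R, a * b ∈ R := by
      rintro a ⟨ξ, rfl⟩ b ⟨η, rfl⟩
      refine ⟨ξ + η, ?_⟩
      ext z
      exact hp.add_left ξ η z.1
    have honeR : (1 : C(C, ℂ)) ∈ R := by
      refine ⟨0, ?_⟩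
      ext z
      exact onb_pzero hp z.1
    have hmulM : ∀ x y : C(C, ℂ), x ∈ M → y ∈ M → x * y ∈ M := by
      intro a b ha hb
      have hle : M * M ≤ M := by
        rw [hM, Submodule.span_mul_span]
        refine Submodule.span_le.mpr ?_
        rintro x hx
        rw [Set.mem_mul] at hx
        obtain ⟨a, ha, b, hb, rfl⟩ := hx
        exact Submodule.subset_span (hmulR a ha b hb)
      exact hle (Submodule.mul_mem_mul ha hb)
    have hstarM : ∀ a ∈ M, star a ∈ M := by
      intro a ha
      refine Submodule.span_induction ?_ ?_ ?_ ?_ ha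
      · rintro x ⟨ξ, rfl⟩
        have : star (ch ξ) = ch (-ξ) := by
          ext z
          exact onb_pconj hp ξ z.1
        rw [this]
        exact Submodule.subset_span ⟨-ξ, rfl⟩
      · rw [star_zero]; exact M.zero_mem
      · intro x y _ _ hx hy
        rw [star_add]; exact M.add_mem hx hy
      · intro c x _ hx
        rw [star_smul]; exact M.smul_mem _ hx
    set A : StarSubalgebra ℂ C(C, ℂ) :=
      { toSubalgebra := M.toSubalgebra (Submodule.subset_span honeR) hmulM
        star_mem' := fun ha => hstarM _ ha } with hA
    have hmemA : ∀ x : C(C, ℂ), x ∈ A ↔ x ∈ M := fun x => Iff.rfl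
    have hsep : A.SeparatesPoints := by
      intro z w hzw
      have hvs : (z : G₀) - (w : G₀) ≠ 0 := sub_ne_zero.mpr fun h => hzw (Subtype.ext h)
      obtain ⟨ξ, hξ⟩ := hp.sep_right _ hvs
      refine ⟨_, ⟨ch ξ, Submodule.subset_span ⟨ξ, rfl⟩, rfl⟩, ?_⟩
      intro heq
      apply hξ
      have hsplit := hp.add_right ξ ((z : G₀) - w) w
      rw [sub_add_cancel] at hsplit
      have heq' : p₀ ξ (z : G₀) = p₀ ξ (w : G₀) := heq
      rw [heq'] at hsplit
      exact mul_right_cancel₀ (onb_pne hp ξ (w : G₀)) (by rw [one_mul, ← hsplit])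
    have hclosure := ContinuousMap.starSubalgebra_topologicalClosure_eq_top_of_separatesPoints A hsep
    -- integrability helpers
    have hint : ∀ ξ : H₀, Integrable (fun x => conj (p₀ ξ x) * f x) (μ₀.restrict C) := by
      intro ξ
      refine hfi.bdd_mul (c := 1) ?_ (Filter.Eventually.of_forall fun x => ?_)
      · exact (Complex.continuous_conj.comp (onb_pcont hp ξ)).aestronglyMeasurable
      · rw [RCLike.norm_conj, hp.norm_one]
    intro g
    set gX : C(C, ℂ) := ⟨fun z => g z.1, g.continuous.comp continuous_subtype_val⟩ with hgX
    have hgmem : gX ∈ closure (A : Set C(C, ℂ)) := by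
      rw [← StarSubalgebra.topologicalClosure_coe, hclosure]
      exact StarSubalgebra.mem_top
    set T := ∫ x in C, conj (g x) * f x ∂μ₀ with hT
    set B := ∫ x in C, ‖f x‖ ∂μ₀ with hB
    have hBnn : 0 ≤ B := integral_nonneg fun x => norm_nonneg _
    have hintg : Integrable (fun x => conj (g x) * f x) (μ₀.restrict C) := by
      refine hfi.bdd_mul (c := ‖g‖) ?_ (Filter.Eventually.of_forall fun x => ?_)
      · exact (Complex.continuous_conj.comp g.continuous).aestronglyMeasurable
      · rw [RCLike.norm_conj]
        exact g.norm_coe_le_norm x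
    have hbound : ∀ ε : ℝ, 0 < ε → ‖T‖ ≤ ε * B := by
      intro ε hε
      obtain ⟨a, haA, hdist⟩ := Metric.mem_closure_iff.mp hgmem ε hε
      obtain ⟨n, c, r, hsum⟩ := Submodule.mem_span_set'.mp (haA : a ∈ M)
      set ξv : Fin n → H₀ := fun i => ((r i).2).choose with hξv
      have hξspec : ∀ i, ch (ξv i) = (r i).1 := fun i => ((r i).2).choose_spec
      set h : G₀ → ℂ := fun x => ∑ i, c i • p₀ (ξv i) x with hh
      have hagree : ∀ x, ∀ hx : x ∈ C, h x = a ⟨x, hx⟩ := by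
        intro x hx
        rw [← hsum]
        have : ((∑ i, c i • (r i : C(C, ℂ))) : C(C, ℂ)) ⟨x, hx⟩
            = ∑ i, c i • ((r i : C(C, ℂ)) ⟨x, hx⟩) := by
          rw [ContinuousMap.coe_sum]
          simp [Finset.sum_apply]
        rw [this, hh]
        refine Finset.sum_congr rfl fun i _ => ?_
        rw [← hξspec i]
        rfl
      have hinth : Integrable (fun x => conj (h x) * f x) (μ₀.restrict C) := by
        have hrw : (fun x => conj (h x) * f x)
            = fun x => ∑ i, conj (c i) • (conj (p₀ (ξv i) x) * f x) := by
          funext x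
          simp only [hh, map_sum]
          rw [Finset.sum_mul]
          refine Finset.sum_congr rfl fun i _ => ?_
          simp [smul_eq_mul, map_mul]
          ring
        rw [hrw]
        exact integrable_finset_sum (f := fun i y => conj (c i) • (conj (p₀ (ξv i) y) * f y))
          Finset.univ (fun i _ => ((hint (ξv i)).smul (conj (c i))))
      have hIh : ∫ x in C, conj (h x) * f x ∂μ₀ = 0 := by
        have hrw : (fun x => conj (h x) * f x)
            = fun x => ∑ i, conj (c i) • (conj (p₀ (ξv i) x) * f x) := by
          funext x
          simp only [hh, map_sum]
          rw [Finset.sum_mul]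
          refine Finset.sum_congr rfl fun i _ => ?_
          simp [smul_eq_mul, map_mul]
          ring
        rw [hrw, integral_finset_sum (f := fun i y => conj (c i) • (conj (p₀ (ξv i) y) * f y))
          Finset.univ (fun i _ => ((hint (ξv i)).smul (conj (c i))))]
        simp only [integral_smul, hstepA, smul_zero, Finset.sum_const_zero]
      have hTsub : T = ∫ x in C, (conj (g x) - conj (h x)) * f x ∂μ₀ := by
        rw [show (fun x => (conj (g x) - conj (h x)) * f x)
            = fun x => conj (g x) * f x - conj (h x) * f x from funext fun x => by ring,
          integral_sub hintg hinth, hIh, sub_zero, hT]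
      rw [hTsub]
      have hest : ‖∫ x in C, (conj (g x) - conj (h x)) * f x ∂μ₀‖
          ≤ ∫ x in C, ε * ‖f x‖ ∂μ₀ := by
        refine norm_integral_le_of_norm_le (hfi.norm.const_mul ε) ?_
        filter_upwards [ae_restrict_mem hCmeas] with x hx
        have h2 : ‖g x - h x‖ ≤ ε := by
          have hco : ‖(gX - a) ⟨x, hx⟩‖ ≤ ‖gX - a‖ := ContinuousMap.norm_coe_le_norm _ _
          have : (gX - a) ⟨x, hx⟩ = g x - h x := by
            rw [ContinuousMap.sub_apply, hagree x hx]
            rfl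
          rw [this] at hco
          calc ‖g x - h x‖ ≤ ‖gX - a‖ := hco
          _ = dist gX a := (dist_eq_norm _ _).symm
          _ ≤ ε := le_of_lt hdist
        calc ‖(conj (g x) - conj (h x)) * f x‖ = ‖g x - h x‖ * ‖f x‖ := by
              rw [norm_mul, ← map_sub, RCLike.norm_conj]
        _ ≤ ε * ‖f x‖ := mul_le_mul_of_nonneg_right h2 (norm_nonneg _)
      calc ‖∫ x in C, (conj (g x) - conj (h x)) * f x ∂μ₀‖
          ≤ ∫ x in C, ε * ‖f x‖ ∂μ₀ := hest
      _ = ε * B := by rw [integral_const_mul, hB]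
    have hT0 : ‖T‖ ≤ 0 := by
      refine le_of_forall_pos_le_add fun ε hε => ?_
      rw [zero_add]
      calc ‖T‖ ≤ ε / (B + 1) * B := hbound _ (by positivity)
      _ ≤ ε := by
          rw [div_mul_eq_mul_div, div_le_iff₀ (by positivity)]
          nlinarith
    exact norm_le_zero_iff.mp hT0
  -- Step D : density of bounded continuous functions in L²
  haveI : Fact ((1 : ℝ≥0∞) ≤ 2) := ⟨one_le_two⟩
  set fd := C.indicator f with hfd
  have hfdL : MemLp fd 2 μ₀ := hf.indicator hCmeas
  set vd := hfdL.toLp fd with hvd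
  have hdense : Dense ((MeasureTheory.Lp.boundedContinuousFunction ℂ 2 μ₀ : AddSubgroup (Lp ℂ 2 μ₀)) : Set (Lp ℂ 2 μ₀)) :=
    MeasureTheory.Lp.boundedContinuousFunction_dense ℂ μ₀ (by norm_num)
  have horth : ∀ w : Lp ℂ 2 μ₀, w ∈ MeasureTheory.Lp.boundedContinuousFunction ℂ 2 μ₀ →
      (inner ℂ w vd : ℂ) = 0 := by
    intro w hw
    obtain ⟨g, hg⟩ := (MeasureTheory.Lp.mem_boundedContinuousFunction_iff).mp hw
    have hwg : (w : G₀ → ℂ) =ᵐ[μ₀] g := by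
      have h1 := ContinuousMap.coeFn_toAEEqFun μ₀ g.toContinuousMap
      rw [hg] at h1
      exact h1
    rw [MeasureTheory.L2.inner_def]
    have hcongr2 : ∫ x, (inner ℂ (w x) (vd x) : ℂ) ∂μ₀
        = ∫ x, C.indicator (fun y => conj (g y) * f y) x ∂μ₀ := by
      refine integral_congr_ae ?_
      filter_upwards [hwg, hfdL.coeFn_toLp] with x h1 h2
      rw [RCLike.inner_apply', h1, h2, hfd]
      by_cases hx : x ∈ C
      · rw [Set.indicator_of_mem hx, Set.indicator_of_mem hx]
      · rw [Set.indicator_of_notMem hx, Set.indicator_of_notMem hx, mul_zero]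
    rw [hcongr2, integral_indicator hCmeas]
    exact hstepC g
  have hvd0 : vd = 0 := by
    have hcont : Continuous fun w : Lp ℂ 2 μ₀ => (inner ℂ w vd : ℂ) :=
      continuous_id.inner continuous_const
    have hfun : (fun w : Lp ℂ 2 μ₀ => (inner ℂ w vd : ℂ)) = fun _ => 0 :=
      hcont.ext_on hdense continuous_const fun w hw => horth w hw
    have hself := congrFun hfun vd
    exact inner_self_eq_zero.mp hself
  have hae : fd =ᵐ[μ₀] 0 := by
    have h1 : ⇑(hfdL.toLp fd) =ᵐ[μ₀] (0 : G₀ → ℂ) := by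
      rw [← hvd] at *
      rw [hvd0]
      exact MeasureTheory.Lp.coeFn_zero ℂ 2 μ₀
    exact hfdL.coeFn_toLp.symm.trans h1
  rw [ae_restrict_iff' hCmeas]
  filter_upwards [hae] with x hx hxC
  rw [hfd] at hx
  rw [Set.indicator_of_mem hxC] at hx
  exact hx

end ONBAux

/-- **Orthonormal basis from a compact open subgroup.**  If `K` is a compact open
subgroup of `G₀` of Haar measure `1`, `D₁` a complete set of coset representatives of
`G₀/K` and `D₂` one of `Ĝ₀/K⊥`, then the Gabor system `{M_δ T_d χ_K : d ∈ D₁, δ ∈ D₂}`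
is an orthonormal basis of `L²(G₀)` (orthonormality together with Parseval's identity). -/
theorem onb_from_compact_open_subgroup
    {G₀ : Type*} [AddCommGroup G₀] [TopologicalSpace G₀] [IsTopologicalAddGroup G₀]
    [LocallyCompactSpace G₀] [SecondCountableTopology G₀]
    [TopologicalSpace.MetrizableSpace G₀] [MeasurableSpace G₀] [BorelSpace G₀]
    {H₀ : Type*} [AddCommGroup H₀] [TopologicalSpace H₀] [IsTopologicalAddGroup H₀]
    [LocallyCompactSpace H₀] [SecondCountableTopology H₀]
    [TopologicalSpace.MetrizableSpace H₀] [MeasurableSpace H₀] [BorelSpace H₀]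
    (μ₀ : Measure G₀) [μ₀.IsAddHaarMeasure]
    (p₀ : H₀ → G₀ → ℂ) (hp₀ : IsDualPairing p₀)
    (K : AddSubgroup G₀) (hKcompact : IsCompact (K : Set G₀)) (hKopen : IsOpen (K : Set G₀))
    (hμK : μ₀ (K : Set G₀) = 1)
    (D₁ : Set G₀) (hD₁ : ∀ x : G₀, ∃! d, d ∈ D₁ ∧ x - d ∈ K)
    (D₂ : Set H₀) (hD₂ : ∀ ξ : H₀, ∃! δ, δ ∈ D₂ ∧ ξ - δ ∈ Kperp p₀ (K : Set G₀)) :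
    -- the Gabor system `M_δ T_d χ_K`
    (∀ d ∈ D₁, ∀ δ ∈ D₂, ∀ d' ∈ D₁, ∀ δ' ∈ D₂,
      ((d, δ) = (d', δ') →
        ∫ x, tfshift p₀ (d, δ) (Set.indicator (K : Set G₀) (fun _ => (1 : ℂ))) x *
          conj (tfshift p₀ (d', δ') (Set.indicator (K : Set G₀) (fun _ => (1 : ℂ))) x) ∂μ₀
          = 1) ∧
      ((d, δ) ≠ (d', δ') →
        ∫ x, tfshift p₀ (d, δ) (Set.indicator (K : Set G₀) (fun _ => (1 : ℂ))) x *
          conj (tfshift p₀ (d', δ') (Set.indicator (K : Set G₀) (fun _ => (1 : ℂ))) x) ∂μ₀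
          = 0)) ∧
    -- completeness: Parseval's identity
    (∀ f : G₀ → ℂ, MemLp f 2 μ₀ →
      ∑' q : D₁ × D₂,
        ‖∫ x, f x * conj (tfshift p₀ ((q.1 : G₀), (q.2 : H₀))
            (Set.indicator (K : Set G₀) (fun _ => (1 : ℂ))) x) ∂μ₀‖ ^ 2
        = ∫ x, ‖f x‖ ^ 2 ∂μ₀) := by
  classical
  have hgb : ∀ (d : G₀) (δ : H₀),
      tfshift p₀ (d, δ) (Set.indicator (K : Set G₀) (fun _ => (1 : ℂ))) = onbGb p₀ K d δ :=
    fun d δ => rfl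
  constructor
  · intro d hd δ hδ d' hd' δ' hδ'
    constructor
    · intro heq
      rw [Prod.mk.injEq] at heq
      rw [hgb, hgb, onbGb_integral μ₀ hp₀ K hKopen hμK hD₁ hD₂ hd hδ hd' hδ', if_pos heq]
    · intro hne
      rw [hgb, hgb, onbGb_integral μ₀ hp₀ K hKopen hμK hD₁ hD₂ hd hδ hd' hδ', if_neg]
      rintro ⟨h1, h2⟩
      exact hne (by rw [h1, h2])
  · intro f hf
    haveI : Fact ((1 : ℝ≥0∞) ≤ 2) := ⟨one_le_two⟩
    set v : ↥D₁ × ↥D₂ → Lp ℂ 2 μ₀ := fun q =>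
      ((onbGb_memL2 μ₀ hp₀ K hKcompact hKopen q.1.1 q.2.1).toLp (onbGb p₀ K q.1.1 q.2.1)) with hv
    have hvcoe : ∀ q : ↥D₁ × ↥D₂, ⇑(v q) =ᵐ[μ₀] onbGb p₀ K q.1.1 q.2.1 := fun q =>
      (onbGb_memL2 μ₀ hp₀ K hKcompact hKopen q.1.1 q.2.1).coeFn_toLp
    -- orthonormality
    have hinner : ∀ q q' : ↥D₁ × ↥D₂, (inner ℂ (v q) (v q') : ℂ)
        = ∫ x, conj (onbGb p₀ K q.1.1 q.2.1 x) * onbGb p₀ K q'.1.1 q'.2.1 x ∂μ₀ := by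
      intro q q'
      rw [MeasureTheory.L2.inner_def]
      refine integral_congr_ae ?_
      filter_upwards [hvcoe q, hvcoe q'] with x h1 h2
      rw [RCLike.inner_apply', h1, h2]
    have hon : Orthonormal ℂ v := by
      rw [orthonormal_iff_ite]
      intro q q'
      rw [hinner q q']
      have hcalc := onbGb_integral μ₀ hp₀ K hKopen hμK hD₁ hD₂ q'.1.2 q'.2.2 q.1.2 q.2.2
      have hswap : ∫ x, conj (onbGb p₀ K q.1.1 q.2.1 x) * onbGb p₀ K q'.1.1 q'.2.1 x ∂μ₀
          = ∫ x, onbGb p₀ K q'.1.1 q'.2.1 x * conj (onbGb p₀ K q.1.1 q.2.1 x) ∂μ₀ :=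
        integral_congr_ae (Filter.Eventually.of_forall fun x => mul_comm _ _)
      rw [hswap, hcalc]
      by_cases h : q = q'
      · subst h
        simp
      · have hne : ¬((q'.1 : G₀) = (q.1 : G₀) ∧ (q'.2 : H₀) = (q.2 : H₀)) := by
          rintro ⟨h1, h2⟩
          exact h (Prod.ext (Subtype.ext h1.symm) (Subtype.ext h2.symm))
        rw [if_neg hne, if_neg h]
    -- density
    have hsp : ⊤ ≤ (Submodule.span ℂ (Set.range v)).topologicalClosure := by
      have hbot : (Submodule.span ℂ (Set.range v))ᗮ = ⊥ := by
        rw [Submodule.eq_bot_iff]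
        intro w hw
        have hcoef : ∀ d, ∀ hd : d ∈ D₁, ∀ δ, ∀ hδ : δ ∈ D₂,
            ∫ x in onbCoset K d, conj (p₀ δ x) * (w : G₀ → ℂ) x ∂μ₀ = 0 := by
          intro d hd δ hδ
          have hmem : v (⟨d, hd⟩, ⟨δ, hδ⟩) ∈ Submodule.span ℂ (Set.range v) :=
            Submodule.subset_span ⟨_, rfl⟩
          have h0 := (Submodule.mem_orthogonal _ w).mp hw _ hmem
          rw [MeasureTheory.L2.inner_def] at h0
          have hcongr : ∫ a, (inner ℂ ((v (⟨d, hd⟩, ⟨δ, hδ⟩)) a) (w a) : ℂ) ∂μ₀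
              = ∫ a, (onbCoset K d).indicator
                  (fun y => conj (p₀ δ y) * (w : G₀ → ℂ) y) a ∂μ₀ := by
            refine integral_congr_ae ?_
            filter_upwards [hvcoe (⟨d, hd⟩, ⟨δ, hδ⟩)] with x h1
            rw [RCLike.inner_apply', h1, onbGb_eq_indicator]
            by_cases hx : x ∈ onbCoset K d
            · rw [Set.indicator_of_mem hx, Set.indicator_of_mem hx]
            · rw [Set.indicator_of_notMem hx, Set.indicator_of_notMem hx, map_zero, zero_mul]
          rw [hcongr, integral_indicator (onbCoset_isOpen hKopen d).measurableSet] at h0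
          exact h0
        have hwz : ∀ d ∈ D₁, μ₀ ({x | (w : G₀ → ℂ) x ≠ 0} ∩ onbCoset K d) = 0 := by
          intro d hd
          have hres := onb_ae_zero_on_coset μ₀ hp₀ K hKcompact hKopen hD₂ d
            (MeasureTheory.Lp.memLp w) (fun δ hδ => hcoef d hd δ hδ)
          have hres2 := (ae_restrict_iff' (onbCoset_isOpen hKopen d).measurableSet).mp hres
          have hnull := ae_iff.mp hres2
          refine measure_mono_null ?_ hnull
          rintro x ⟨h1, h2⟩
          exact fun himp => h1 (himp h2)
        have hwae : ∀ᵐ x ∂μ₀, (w : G₀ → ℂ) x = 0 := by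
          rw [ae_iff]
          have hsub : {x | ¬(w : G₀ → ℂ) x = 0}
              ⊆ ⋃ d ∈ D₁, ({x | (w : G₀ → ℂ) x ≠ 0} ∩ onbCoset K d) := by
            intro x hx
            obtain ⟨d, ⟨hd, hk⟩, -⟩ := hD₁ x
            exact Set.mem_biUnion hd ⟨hx, hk⟩
          exact measure_mono_null hsub
            ((measure_biUnion_null_iff (onb_D1_countable hKopen hD₁)).mpr hwz)
        have hwz0 : (w : G₀ → ℂ) =ᵐ[μ₀] (0 : G₀ → ℂ) := hwae
        exact MeasureTheory.Lp.ext
          (hwz0.trans (Filter.EventuallyEq.symm (MeasureTheory.Lp.coeFn_zero ℂ 2 μ₀)))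
      exact (Submodule.topologicalClosure_eq_top_iff.mpr hbot).ge
    -- Parseval
    set F := hf.toLp f with hF
    set b := HilbertBasis.mk hon hsp with hb
    have hbv : ∀ q, b q = v q := fun q => by
      rw [hb]
      exact congrFun (HilbertBasis.coe_mk hon hsp) q
    have hparse := b.tsum_inner_mul_inner F F
    have hterm : ∀ q : ↥D₁ × ↥D₂, (inner ℂ F (b q) : ℂ) * inner ℂ (b q) F
        = ((‖∫ x, f x * conj (onbGb p₀ K q.1.1 q.2.1 x) ∂μ₀‖ ^ 2 : ℝ) : ℂ) := by
      intro q
      rw [hbv q]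
      have hq : (inner ℂ (v q) F : ℂ) = ∫ x, f x * conj (onbGb p₀ K q.1.1 q.2.1 x) ∂μ₀ := by
        rw [MeasureTheory.L2.inner_def]
        refine integral_congr_ae ?_
        filter_upwards [hvcoe q, hf.coeFn_toLp] with x h1 h2
        rw [RCLike.inner_apply', h1, hF, h2, mul_comm]
      rw [← inner_conj_symm, hq, mul_comm, Complex.mul_conj, Complex.normSq_eq_norm_sq]
    have hFF : (inner ℂ F F : ℂ) = ((∫ x, ‖f x‖ ^ 2 ∂μ₀ : ℝ) : ℂ) := by
      have hOR : ∫ x, ((‖f x‖ ^ 2 : ℝ) : ℂ) ∂μ₀ = ((∫ x, ‖f x‖ ^ 2 ∂μ₀ : ℝ) : ℂ) :=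
        integral_ofReal
      rw [MeasureTheory.L2.inner_def, ← hOR]
      refine integral_congr_ae ?_
      filter_upwards [hf.coeFn_toLp] with x h2
      rw [RCLike.inner_apply', hF, h2, mul_comm, Complex.mul_conj,
        Complex.normSq_eq_norm_sq]
    have hsum : ((∑' q : ↥D₁ × ↥D₂,
          ‖∫ x, f x * conj (onbGb p₀ K q.1.1 q.2.1 x) ∂μ₀‖ ^ 2 : ℝ) : ℂ)
        = ((∫ x, ‖f x‖ ^ 2 ∂μ₀ : ℝ) : ℂ) := by
      rw [Complex.ofReal_tsum, ← hFF, ← hparse]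
      exact tsum_congr fun q => (hterm q).symm
    exact Complex.ofReal_inj.mp hsum
end GSjo
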